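/- (Generalized Cramer–Rao bound) Let x ∈ ℝⁿ have all entries strictly positive, let U be a real n×q matrix of full column rank, and set g = (Uᵀ·diag(x)·U)⁻¹. Let V and V̄ be real n×n matrices with V̄ᵀ·U = 0. Define Cov(V) = (V − V̄)ᵀ·diag(1/x)·(V − V̄). Then the n×n matrix Cov(V) − Vᵀ·U·g·Uᵀ·V is positive semidefinite. -/

import Mathlib

open Matrix

private lemma mulVec_inj_aux {n q : ℕ} (U : Matrix (Fin n) (Fin q) ℝ)
    (hU : LinearIndependent ℝ (fun j : Fin q => fun i : Fin n => U i j))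
    {c : Fin q → ℝ} (hc : U *ᵥ c = 0) : c = 0 := by
  have h := Fintype.linearIndependent_iff.mp hU c ?_
  · funext j; exact h j
  · funext i
    have := congrFun hc i
    simpa [Matrix.mulVec, dotProduct, mul_comm] using this

private lemma gram_posDef {n q : ℕ} (x : Fin n → ℝ) (hx : ∀ i, 0 < x i)
    (U : Matrix (Fin n) (Fin q) ℝ)
    (hU : LinearIndependent ℝ (fun j : Fin q => fun i : Fin n => U i j)) :
    (Uᵀ * Matrix.diagonal x * U).PosDef := by
  refine Matrix.PosDef.of_dotProduct_mulVec_pos ?_ ?_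
  · show (Uᵀ * Matrix.diagonal x * U)ᴴ = _
    have key : ∀ a b, (Uᵀ * Matrix.diagonal x * U) a b = ∑ k, U k a * x k * U k b := by
      intro a b
      rw [Matrix.mul_assoc, Matrix.mul_apply]
      simp only [Matrix.diagonal_mul, Matrix.transpose_apply]
      exact Finset.sum_congr rfl fun k _ => by ring
    ext i j
    rw [Matrix.conjTranspose_apply, star_trivial, key, key]
    exact Finset.sum_congr rfl fun k _ => by ring
  · intro c hc
    have hy : U *ᵥ c ≠ 0 := fun h => hc (mulVec_inj_aux U hU h)
    have key : star c ⬝ᵥ ((Uᵀ * Matrix.diagonal x * U) *ᵥ c)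
        = ∑ i, x i * ((U *ᵥ c) i)^2 := by
      rw [← Matrix.mulVec_mulVec, ← Matrix.mulVec_mulVec, Matrix.dotProduct_mulVec,
        Matrix.vecMul_transpose]
      simp only [star_trivial, Matrix.mulVec_diagonal, dotProduct]
      exact Finset.sum_congr rfl fun k _ => by ring
    rw [key]
    obtain ⟨i, hi⟩ := Function.ne_iff.mp hy
    refine Finset.sum_pos' (fun j _ => ?_) ⟨i, Finset.mem_univ i, ?_⟩
    · exact mul_nonneg (hx j).le (sq_nonneg _)
    · exact mul_pos (hx i) (pow_two_pos_of_ne_zero hi)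

theorem stmt6 {n q : ℕ} (hn : 0 < n) (hq : 0 < q)
    (x : Fin n → ℝ) (hx : ∀ i, 0 < x i)
    (U : Matrix (Fin n) (Fin q) ℝ)
    (hU : LinearIndependent ℝ (fun j : Fin q => fun i : Fin n => U i j))
    (V Vbar : Matrix (Fin n) (Fin n) ℝ) (hVbar : Vbarᵀ * U = 0) :
    let g := (Uᵀ * Matrix.diagonal x * U)⁻¹
    let Cov := (V - Vbar)ᵀ * Matrix.diagonal (fun i => (x i)⁻¹) * (V - Vbar)
    (Cov - Vᵀ * U * g * Uᵀ * V).PosSemidef := by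
  intro g Cov
  set G := Uᵀ * Matrix.diagonal x * U with hGdef
  have hG : G.PosDef := gram_posDef x hx U hU
  have hGdet : IsUnit G.det := hG.det_pos.ne'.isUnit
  have hgG : g * G = 1 := Matrix.nonsing_inv_mul G hGdet
  have hGsymm : Gᵀ = G := by
    have h := hG.isHermitian
    ext i j
    have := congrFun (congrFun h i) j
    simpa using this
  have hgsymm : gᵀ = g := by
    show (G⁻¹)ᵀ = G⁻¹
    rw [Matrix.transpose_nonsing_inv, hGsymm]
  -- square roots
  set s : Fin n → ℝ := fun i => Real.sqrt (x i) with hsdef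
  have hspos : ∀ i, 0 < s i := fun i => Real.sqrt_pos.mpr (hx i)
  set Dh := Matrix.diagonal s with hDh
  set Dih := Matrix.diagonal (fun i => (s i)⁻¹) with hDih
  have hDihDh : Dih * Dh = 1 := by
    have h : (fun i => (s i)⁻¹ * s i) = fun _ => (1:ℝ) :=
      funext fun i => inv_mul_cancel₀ (hspos i).ne'
    rw [hDih, hDh, Matrix.diagonal_mul_diagonal, h, Matrix.diagonal_one]
  have hDhDih : Dh * Dih = 1 := by
    have h : (fun i => s i * (s i)⁻¹) = fun _ => (1:ℝ) :=
      funext fun i => mul_inv_cancel₀ (hspos i).ne'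
    rw [hDih, hDh, Matrix.diagonal_mul_diagonal, h, Matrix.diagonal_one]
  have hDhDh : Dh * Dh = Matrix.diagonal x := by
    have h : (fun i => s i * s i) = x := funext fun i => Real.mul_self_sqrt (hx i).le
    rw [hDh, Matrix.diagonal_mul_diagonal, h]
  have hDihDih : Dih * Dih = Matrix.diagonal (fun i => (x i)⁻¹) := by
    have h : (fun i => (s i)⁻¹ * (s i)⁻¹) = fun i => (x i)⁻¹ := funext fun i => by
      rw [← mul_inv, Real.mul_self_sqrt (hx i).le]
    rw [hDih, Matrix.diagonal_mul_diagonal, h]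
  -- projection
  set P := Dh * U * g * Uᵀ * Dh with hPdef
  have hDht : Dhᵀ = Dh := by rw [hDh, Matrix.diagonal_transpose]
  have hDiht : Dihᵀ = Dih := by rw [hDih, Matrix.diagonal_transpose]
  have hPsymm : Pᵀ = P := by
    rw [hPdef]
    simp only [Matrix.transpose_mul, Matrix.transpose_transpose, hDht, hgsymm,
      Matrix.mul_assoc]
  have hPP : P * P = P := by
    calc P * P = Dh * (U * (g * ((Uᵀ * (Dh * Dh) * U) * (g * (Uᵀ * Dh))))) := by
          simp only [hPdef, Matrix.mul_assoc]
      _ = Dh * (U * ((g * G) * (g * (Uᵀ * Dh)))) := by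
          rw [hDhDh, ← hGdef]; simp only [Matrix.mul_assoc]
      _ = P := by rw [hgG, Matrix.one_mul, hPdef]; simp only [Matrix.mul_assoc]
  set Q := Dih * (V - Vbar) with hQdef
  have hUVbar : Uᵀ * Vbar = 0 := by
    have h := congrArg Matrix.transpose hVbar
    simpa [Matrix.transpose_mul] using h
  have hUW : Uᵀ * (V - Vbar) = Uᵀ * V := by rw [Matrix.mul_sub, hUVbar, sub_zero]
  have hWU : (V - Vbar)ᵀ * U = Vᵀ * U := by
    have h := congrArg Matrix.transpose hUW
    simpa [Matrix.transpose_mul] using h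
  have step1 : (1 - P)ᵀ * (1 - P) = 1 - P := by
    simp only [Matrix.transpose_sub, Matrix.transpose_one, hPsymm, Matrix.sub_mul,
      Matrix.mul_sub, hPP, Matrix.one_mul, Matrix.mul_one]
    abel
  have hQtQ : Qᵀ * Q = Cov := by
    calc Qᵀ * Q = (V - Vbar)ᵀ * ((Dih * Dih) * (V - Vbar)) := by
          simp only [hQdef, Matrix.transpose_mul, hDiht, Matrix.mul_assoc]
      _ = Cov := by rw [hDihDih]; simp only [Cov, Matrix.mul_assoc]
  have hQtPQ : Qᵀ * (P * Q) = Vᵀ * U * g * Uᵀ * V := by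
    have e1 : P * Q = Dh * (U * (g * (Uᵀ * V))) := by
      calc P * Q = Dh * (U * (g * (Uᵀ * ((Dh * Dih) * (V - Vbar))))) := by
            simp only [hPdef, hQdef, Matrix.mul_assoc]
        _ = _ := by rw [hDhDih, Matrix.one_mul, hUW]
    rw [e1]
    calc Qᵀ * (Dh * (U * (g * (Uᵀ * V))))
        = (V - Vbar)ᵀ * ((Dih * Dh) * (U * (g * (Uᵀ * V)))) := by
          simp only [hQdef, Matrix.transpose_mul, hDiht, Matrix.mul_assoc]
      _ = (V - Vbar)ᵀ * U * g * Uᵀ * V := by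
          rw [hDihDh, Matrix.one_mul]; simp only [Matrix.mul_assoc]
      _ = Vᵀ * U * g * Uᵀ * V := by rw [hWU]
  have key : ((1 - P) * Q)ᵀ * ((1 - P) * Q) = Cov - Vᵀ * U * g * Uᵀ * V := by
    calc ((1 - P) * Q)ᵀ * ((1 - P) * Q)
        = Qᵀ * (((1 - P)ᵀ * (1 - P)) * Q) := by
          simp only [Matrix.transpose_mul, Matrix.mul_assoc]
      _ = Qᵀ * ((1 - P) * Q) := by rw [step1]
      _ = Qᵀ * Q - Qᵀ * (P * Q) := by
          rw [Matrix.sub_mul, Matrix.one_mul, Matrix.mul_sub]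
      _ = Cov - Vᵀ * U * g * Uᵀ * V := by rw [hQtQ, hQtPQ]
  rw [← key]
  have hct : ((1 - P) * Q)ᵀ = ((1 - P) * Q)ᴴ := by
    ext i j; simp [Matrix.conjTranspose_apply]
  rw [hct]
  exact Matrix.posSemidef_conjTranspose_mul_self _
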